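/- Let d ≥ 2, 1 < p < d, and α ≥ 0. Define ψ_α(r) := (α + r^{p/(p-1)})^{-(d-p)(p-1)/p²} for r > 0 and W_α(r) := -((d-p)/p)^p · (α·d·p/(d-p) + r^{p/(p-1)}) / (α + r^{p/(p-1)})^p. Then ψ_α is a positive solution on (0,∞) of the radial equation -|ψ'|^{p-2}[(p-1)ψ'' + ((d-1)/r)ψ'] + W_α(r)|ψ|^{p-2}ψ = 0. -/

import Mathlib

open Real

theorem stmt_9 (d : ℕ) (hd : 2 ≤ d) (p : ℝ) (hp₁ : 1 < p) (hp₂ : p < d) (α : ℝ) (hα : 0 ≤ α)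
    (ψ W : ℝ → ℝ)
    (hψ : ∀ r : ℝ, ψ r = (α + r ^ (p / (p - 1))) ^ (-((d - p) * (p - 1) / p ^ 2)))
    (hW : ∀ r : ℝ, W r = -((d - p) / p) ^ p *
        (α * d * p / (d - p) + r ^ (p / (p - 1))) / (α + r ^ (p / (p - 1))) ^ p) :
    ∀ r : ℝ, 0 < r →
      0 < ψ r ∧
      -(|deriv ψ r| ^ (p - 2) *
            ((p - 1) * deriv (deriv ψ) r + ((d - 1) / r) * deriv ψ r)) +
          W r * |ψ r| ^ (p - 2) * ψ r = 0 := by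
  have hp0 : (0:ℝ) < p := lt_trans one_pos hp₁
  have hp1 : (0:ℝ) < p - 1 := sub_pos.mpr hp₁
  have hdp : (0:ℝ) < (d:ℝ) - p := sub_pos.mpr hp₂
  set q : ℝ := p / (p - 1) with hqdef
  set β : ℝ := ((d:ℝ) - p) * (p - 1) / p ^ 2 with hβdef
  have hq0 : 0 < q := div_pos hp0 hp1
  have hβ0 : 0 < β := div_pos (mul_pos hdp hp1) (by positivity)
  have hψfun : ψ = fun s : ℝ => (α + s ^ q) ^ (-β) := funext hψ
  have hderiv : ∀ s : ℝ, 0 < s →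
      HasDerivAt ψ (-(β*q) * s^(q-1) * (α + s^q)^(-β-1)) s := by
    intro s hs
    have hAs : 0 < α + s ^ q := by
      have := Real.rpow_pos_of_pos hs q
      linarith
    have h1 : HasDerivAt (fun x : ℝ => x ^ q) (q * s ^ (q-1)) s :=
      Real.hasDerivAt_rpow_const (Or.inl hs.ne')
    have h2 : HasDerivAt (fun x : ℝ => α + x ^ q) (q * s ^ (q-1)) s := h1.const_add α
    have h3 : HasDerivAt (fun y : ℝ => y ^ (-β)) (-β * (α + s^q) ^ (-β-1)) (α + s^q) :=
      Real.hasDerivAt_rpow_const (Or.inl hAs.ne')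
    have h4 := h3.comp s h2
    have heq : -(β*q) * s^(q-1) * (α + s^q)^(-β-1)
        = -β * (α + s^q) ^ (-β-1) * (q * s^(q-1)) := by ring
    rw [hψfun, heq]
    exact h4
  intro r hr
  have hrq : 0 < r ^ q := Real.rpow_pos_of_pos hr q
  have hA0 : 0 < α + r ^ q := by linarith
  set A : ℝ := α + r ^ q with hAdef
  have hd1 : deriv ψ r = -(β*q) * r^(q-1) * A^(-β-1) := (hderiv r hr).deriv
  have hevent : deriv ψ =ᶠ[nhds r]
      (fun s => -(β*q) * s^(q-1) * (α + s^q)^(-β-1)) := by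
    filter_upwards [Ioi_mem_nhds hr] with s hs
    exact (hderiv s hs).deriv
  have hf' : HasDerivAt (fun s : ℝ => -(β*q) * s^(q-1) * (α + s^q)^(-β-1))
      (-(β*q) * ((q-1) * r^(q-2) * A^(-β-1)
        + r^(q-1) * ((-β-1) * A^(-β-2) * (q * r^(q-1))))) r := by
    have h1 : HasDerivAt (fun x : ℝ => x ^ (q-1)) ((q-1) * r ^ (q-1-1)) r :=
      Real.hasDerivAt_rpow_const (Or.inl hr.ne')
    have h2 : HasDerivAt (fun x : ℝ => x ^ q) (q * r ^ (q-1)) r :=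
      Real.hasDerivAt_rpow_const (Or.inl hr.ne')
    have h3 : HasDerivAt (fun x : ℝ => α + x ^ q) (q * r ^ (q-1)) r := h2.const_add α
    have h4 : HasDerivAt (fun y : ℝ => y ^ (-β-1)) ((-β-1) * A ^ (-β-1-1)) A :=
      Real.hasDerivAt_rpow_const (Or.inl hA0.ne')
    have h5 : HasDerivAt (fun x : ℝ => (α + x^q) ^ (-β-1))
        ((-β-1) * A^(-β-1-1) * (q*r^(q-1))) r := by
        rw [hAdef] at h4 ⊢; exact h4.comp r h3
    have h6 := (h1.mul h5).const_mul (-(β*q))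
    have e1 : q - 1 - 1 = q - 2 := by ring
    have e2 : -β - 1 - 1 = -β - 2 := by ring
    rw [e1, e2, ← hAdef] at h6
    have efun : (fun s : ℝ => -(β*q) * s^(q-1) * (α + s^q)^(-β-1))
        = fun y : ℝ => -(β*q) * (y^(q-1) * (α + y^q)^(-β-1)) := by
      funext y; ring
    rw [efun]
    exact h6
  have hd2 : deriv (deriv ψ) r
      = -(β*q) * ((q-1) * r^(q-2) * A^(-β-1)
        + r^(q-1) * ((-β-1) * A^(-β-2) * (q * r^(q-1)))) := by
    rw [hevent.deriv_eq]
    exact hf'.deriv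
  refine ⟨by rw [hψ r]; exact Real.rpow_pos_of_pos hA0 _, ?_⟩
  rw [hψ r, hW r, hd1, hd2, ← hAdef]
  -- basic nonzero/positivity facts
  have hβq0 : (0:ℝ) < β * q := mul_pos hβ0 hq0
  have hApne : A ^ p ≠ 0 := ne_of_gt (Real.rpow_pos_of_pos hA0 p)
  -- absolute values
  have habs1 : |(-(β * q) * r ^ (q - 1) * A ^ (-β - 1))|
      = β * q * r ^ (q - 1) * A ^ (-β - 1) := by
    have h : -(β * q) * r ^ (q - 1) * A ^ (-β - 1)
        = -(β * q * r ^ (q - 1) * A ^ (-β - 1)) := by ring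
    rw [h, abs_neg, abs_of_pos]
    exact mul_pos (mul_pos hβq0 (Real.rpow_pos_of_pos hr _)) (Real.rpow_pos_of_pos hA0 _)
  have habs2 : |A ^ (-β)| = A ^ (-β) := abs_of_pos (Real.rpow_pos_of_pos hA0 _)
  -- remove the division by r
  have hx1 : r ^ (q - 1) = r ^ (q - 2) * r := by
    rw [show q - 1 = q - 2 + 1 by ring, Real.rpow_add_one hr.ne']
  have hdiv : ((d:ℝ) - 1) / r * (-(β * q) * r ^ (q - 1) * A ^ (-β - 1))
      = -(β * q * ((d:ℝ) - 1) * r ^ (q - 2) * A ^ (-β - 1)) := by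
    rw [hx1]; field_simp
  -- algebraic identities on the parameters
  have hpq1 : (p - 1) * (q - 1) = 1 := by rw [hqdef]; field_simp; ring
  have hpq2 : (p - 1) * q = p := by rw [hqdef]; field_simp
  have hc : β * q = ((d:ℝ) - p) / p := by rw [hβdef, hqdef]; field_simp
  have hBP : (β + 1) * p = (d:ℝ) - β * q := by rw [hc, hβdef]; field_simp; ring
  have hc2 : β * q * (α * (d:ℝ) * p / ((d:ℝ) - p)) = (d:ℝ) * α := by
    rw [hc]; field_simp
  -- exponent bookkeeping
  set EE : ℝ := -(β * (p - 1)) - p with hEE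
  have hP0 : r ^ ((q - 1) * (p - 2)) * r ^ (q - 2) = 1 := by
    rw [← Real.rpow_add hr, show (q - 1) * (p - 2) + (q - 2) = 0 by
      rw [hqdef]; field_simp; ring, Real.rpow_zero]
  have hPX : r ^ ((q - 1) * (p - 2)) * (r ^ (q - 1) * r ^ (q - 1)) = r ^ q := by
    rw [← Real.rpow_add hr, ← Real.rpow_add hr]
    congr 1
    rw [hqdef]; field_simp; ring
  have hQ1 : A ^ ((-β - 1) * (p - 2)) * A ^ (-β - 1) = A ^ EE * A := by
    rw [← Real.rpow_add hA0, ← Real.rpow_add_one hA0.ne' EE]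
    congr 1
    rw [hEE]; ring
  have hQ2 : A ^ ((-β - 1) * (p - 2)) * A ^ (-β - 2) = A ^ EE := by
    rw [← Real.rpow_add hA0]
    congr 1
    rw [hEE]; ring
  have hY0 : (A ^ (-β)) ^ (p - 2) * A ^ (-β) = A ^ EE * A ^ p := by
    rw [← Real.rpow_mul hA0.le, ← Real.rpow_add hA0, ← Real.rpow_add hA0]
    congr 1
    rw [hEE]; ring
  have hC : (β * q) ^ (p - 2) * (β * q) = (β * q) ^ (p - 1) := by
    rw [show p - 1 = p - 2 + 1 by ring, Real.rpow_add_one hβq0.ne']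
  have hCp : (((d:ℝ) - p) / p) ^ p = (β * q) ^ (p - 1) * (β * q) := by
    rw [← hc, ← Real.rpow_add_one hβq0.ne' (p - 1)]
    congr 1
    ring
  have hpow1 : (β * q * r ^ (q - 1) * A ^ (-β - 1)) ^ (p - 2)
      = (β * q) ^ (p - 2) * r ^ ((q - 1) * (p - 2)) * A ^ ((-β - 1) * (p - 2)) := by
    rw [Real.mul_rpow (by positivity) (Real.rpow_pos_of_pos hA0 _).le,
      Real.mul_rpow hβq0.le (Real.rpow_pos_of_pos hr _).le,
      Real.rpow_mul hr.le, Real.rpow_mul hA0.le]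
  rw [habs1, habs2, hdiv]
  have hterm1 :
      -((β * q * r ^ (q - 1) * A ^ (-β - 1)) ^ (p - 2) *
        ((p - 1) * (-(β * q) * ((q - 1) * r ^ (q - 2) * A ^ (-β - 1)
            + r ^ (q - 1) * ((-β - 1) * A ^ (-β - 2) * (q * r ^ (q - 1))))) +
          -(β * q * ((d:ℝ) - 1) * r ^ (q - 2) * A ^ (-β - 1))))
      = (β * q) ^ (p - 1) * A ^ EE * ((d:ℝ) * α + β * q * r ^ q) := by
    rw [hpow1]
    calc (-((β * q) ^ (p - 2) * r ^ ((q - 1) * (p - 2)) * A ^ ((-β - 1) * (p - 2)) *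
        ((p - 1) * (-(β * q) * ((q - 1) * r ^ (q - 2) * A ^ (-β - 1)
            + r ^ (q - 1) * ((-β - 1) * A ^ (-β - 2) * (q * r ^ (q - 1))))) +
          -(β * q * ((d:ℝ) - 1) * r ^ (q - 2) * A ^ (-β - 1)))))
        = (β * q) ^ (p - 2) * (β * q) *
          ((d:ℝ) * (r ^ ((q - 1) * (p - 2)) * r ^ (q - 2)) *
            (A ^ ((-β - 1) * (p - 2)) * A ^ (-β - 1))
          - ((β + 1) * p) * (r ^ ((q - 1) * (p - 2)) * (r ^ (q - 1) * r ^ (q - 1))) *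
            (A ^ ((-β - 1) * (p - 2)) * A ^ (-β - 2))) := by
          linear_combination ((β * q) ^ (p - 2) * (β * q) * r ^ ((q - 1) * (p - 2)) * A ^ ((-β - 1) * (p - 2)) * r ^ (q - 2) * A ^ (-β - 1)) * hpq1 - ((β * q) ^ (p - 2) * (β * q) * (β + 1) * r ^ ((q - 1) * (p - 2)) * A ^ ((-β - 1) * (p - 2)) * r ^ (q - 1) * r ^ (q - 1) * A ^ (-β - 2)) * hpq2
      _ = (β * q) ^ (p - 1) * ((d:ℝ) * 1 * (A ^ EE * A)
            - ((d:ℝ) - β * q) * r ^ q * A ^ EE) := by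
        rw [hC, hP0, hPX, hQ1, hQ2, hBP]
      _ = (β * q) ^ (p - 1) * A ^ EE * ((d:ℝ) * α + β * q * r ^ q) := by
        rw [hAdef]; ring
  have hterm2 :
      -(((d:ℝ) - p) / p) ^ p * (α * (d:ℝ) * p / ((d:ℝ) - p) + r ^ q) / A ^ p *
          (A ^ (-β)) ^ (p - 2) * A ^ (-β)
      = -((β * q) ^ (p - 1) * A ^ EE * ((d:ℝ) * α + β * q * r ^ q)) := by
    rw [hCp, div_mul_eq_mul_div, div_mul_eq_mul_div, div_eq_iff hApne]
    linear_combination (-((β * q) ^ (p - 1) * (β * q)) * (α * (d:ℝ) * p / ((d:ℝ) - p) + r ^ q)) * hY0 + (-((β * q) ^ (p - 1) * A ^ EE * A ^ p)) * hc2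
  linear_combination hterm1 + hterm2
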